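/- Let X, Y and Θ be real Hilbert spaces, A : X → X bounded with ‖exp(tA)‖ ≤ 1 for all t ∈ [0,T], C : X → Y bounded, T > 0. Assume exact observability: ∫₀^T ‖C (exp(tA) x)‖²_Y dt ≥ γ² ‖x‖²_X for all x ∈ X and some γ > 0. Let U₀ : Θ → Θ be bounded self-adjoint with ⟨θ,U₀θ⟩ ≥ δ‖θ‖² for some δ > 0, and let B : [0,T] → L(Θ,X) be strongly measurable with 0 < L := T‖C‖(∫₀^T ‖B(s)‖² ds)^{1/2}. Define Π(t)ξ = ∫₀^t exp((t−s)A) B(s)ξ ds. Then for every Δζ ∈ X and every ξ ∈ Θ, 2⟨ξ, U₀ξ⟩_Θ + 2∫₀^T ‖C(exp(tA)Δζ) + CΠ(t)ξ‖²_Y dt ≥ min(δ/L², 1) · γ² · ‖Δζ‖²_X. -/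

import Mathlib

set_option maxHeartbeats 1000000
set_option synthInstance.maxHeartbeats 200000


open MeasureTheory NormedSpace
open scoped RealInnerProductSpace

/-- Coercive lower bound, the analytical heart of Part 2 of the proof of Theorem 3.2. -/
theorem stmt_9
    {X : Type*} [NormedAddCommGroup X] [InnerProductSpace ℝ X] [CompleteSpace X]
    {Y : Type*} [NormedAddCommGroup Y] [InnerProductSpace ℝ Y] [CompleteSpace Y]
    {Θ : Type*} [NormedAddCommGroup Θ] [InnerProductSpace ℝ Θ] [CompleteSpace Θ]
    (A : X →L[ℝ] X) (C : X →L[ℝ] Y) (T : ℝ) (hT : 0 < T)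
    (hcontr : ∀ t ∈ Set.Icc (0 : ℝ) T, ‖exp (t • A)‖ ≤ 1)
    (γ : ℝ) (hγ : 0 < γ)
    (hobs : ∀ x : X, γ ^ 2 * ‖x‖ ^ 2 ≤ ∫ t in (0 : ℝ)..T, ‖C (exp (t • A) x)‖ ^ 2)
    (U₀ : Θ →L[ℝ] Θ) (hU₀sa : ContinuousLinearMap.adjoint U₀ = U₀)
    (δ : ℝ) (hδ : 0 < δ) (hU₀ : ∀ θ : Θ, δ * ‖θ‖ ^ 2 ≤ ⟪θ, U₀ θ⟫)
    (B : ℝ → Θ →L[ℝ] X)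
    (hB_meas : AEStronglyMeasurable B (volume.restrict (Set.Ioc (0 : ℝ) T)))
    (hB_L2 : IntervalIntegrable (fun s => ‖B s‖ ^ 2) volume 0 T)
    (L : ℝ) (hL : L = T * ‖C‖ * Real.sqrt (∫ s in (0 : ℝ)..T, ‖B s‖ ^ 2)) (hLpos : 0 < L) :
    let Sens : ℝ → Θ →L[ℝ] X := fun t => ∫ s in (0 : ℝ)..t, exp ((t - s) • A) ∘L B s
    ∀ (Δζ : X) (ξ : Θ),
      min (δ / L ^ 2) 1 * γ ^ 2 * ‖Δζ‖ ^ 2 ≤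
        2 * ⟪ξ, U₀ ξ⟫ +
          2 * ∫ t in (0 : ℝ)..T, ‖C (exp (t • A) Δζ) + C (Sens t ξ)‖ ^ 2 := by
  intro Sens Δζ ξ
  letI : NormedAlgebra ℚ (X →L[ℝ] X) := NormedAlgebra.restrictScalars ℚ ℝ _
  have hSens : Sens = fun t => ∫ s in (0 : ℝ)..t, exp ((t - s) • A) ∘L B s := rfl
  have hT0 : (0:ℝ) ≤ T := hT.le
  set IT : ℝ := ∫ s in (0:ℝ)..T, ‖B s‖ ^ 2 with hIT
  have hIT0 : 0 ≤ IT := intervalIntegral.integral_nonneg hT0 fun s _ => sq_nonneg _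
  have hITpos : 0 < IT := by
    rcases hIT0.lt_or_eq with h | h
    · exact h
    · exfalso
      rw [← h, Real.sqrt_zero, mul_zero] at hL
      rw [hL] at hLpos
      exact lt_irrefl 0 hLpos
  have hsT : 0 < Real.sqrt T := Real.sqrt_pos.mpr hT
  have hsI : 0 < Real.sqrt IT := Real.sqrt_pos.mpr hITpos
  have hTT : Real.sqrt T * Real.sqrt T = T := Real.mul_self_sqrt hT0
  have hII : Real.sqrt IT * Real.sqrt IT = IT := Real.mul_self_sqrt hIT0
  -- interval integrability of ‖B‖ on [0, T]
  have hBnorm_int : IntervalIntegrable (fun s => ‖B s‖) volume 0 T := by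
    apply IntervalIntegrable.mono_fun' (g := fun s => (1 + ‖B s‖ ^ 2) / 2)
    · exact (intervalIntegrable_const.add hB_L2).div_const 2
    · rw [Set.uIoc_of_le hT0]; exact hB_meas.norm
    · refine Filter.Eventually.of_forall fun s => ?_
      have h1 : (0:ℝ) ≤ (‖B s‖ - 1) ^ 2 := sq_nonneg _
      show ‖‖B s‖‖ ≤ (1 + ‖B s‖ ^ 2) / 2
      rw [norm_norm]
      nlinarith
  -- measurability of the integrand of `Sens t`
  have hmeas : ∀ t ∈ Set.Icc (0:ℝ) T,
      AEStronglyMeasurable (fun s => exp ((t - s) • A) ∘L B s)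
        (volume.restrict (Set.uIoc (0:ℝ) t)) := by
    intro t ht
    have hB' : AEStronglyMeasurable B (volume.restrict (Set.uIoc (0:ℝ) t)) := by
      rw [Set.uIoc_of_le ht.1]
      exact hB_meas.mono_measure (Measure.restrict_mono (Set.Ioc_subset_Ioc_right ht.2) le_rfl)
    have hc : Continuous fun s : ℝ => exp ((t - s) • A) :=
      exp_continuous.comp ((continuous_const.sub continuous_id).smul continuous_const)
    exact (ContinuousLinearMap.compL ℝ Θ X X).aestronglyMeasurable_comp₂
      hc.aestronglyMeasurable hB'
  have hsub : ∀ t ∈ Set.Icc (0:ℝ) T, Set.uIoc (0:ℝ) t ⊆ Set.uIoc (0:ℝ) T := by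
    intro t ht
    rw [Set.uIoc_of_le ht.1, Set.uIoc_of_le hT0]
    exact Set.Ioc_subset_Ioc_right ht.2
  -- pointwise norm bound on the integrand
  have hptbd : ∀ t ∈ Set.Icc (0:ℝ) T, ∀ s ∈ Set.Icc (0:ℝ) t,
      ‖exp ((t - s) • A) ∘L B s‖ ≤ ‖B s‖ := by
    intro t ht s hs
    have h1 : ‖exp ((t - s) • A)‖ ≤ 1 := by
      apply hcontr
      constructor
      · linarith [hs.2]
      · linarith [hs.1, ht.2]
    calc ‖exp ((t - s) • A) ∘L B s‖ ≤ ‖exp ((t - s) • A)‖ * ‖B s‖ :=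
          ContinuousLinearMap.opNorm_comp_le _ _
      _ ≤ 1 * ‖B s‖ := by gcongr
      _ = ‖B s‖ := one_mul _
  -- interval integrability of the integrand of `Sens t`
  have hSint : ∀ t ∈ Set.Icc (0:ℝ) T,
      IntervalIntegrable (fun s => exp ((t - s) • A) ∘L B s) volume 0 t := by
    intro t ht
    apply IntervalIntegrable.mono_fun (hBnorm_int.mono_set' (hsub t ht)) (hmeas t ht)
    refine (MeasureTheory.ae_restrict_mem measurableSet_uIoc).mono fun s hs => ?_
    rw [Set.uIoc_of_le ht.1] at hs
    show ‖(exp ((t - s) • A)).comp (B s)‖ ≤ ‖‖B s‖‖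
    rw [norm_norm]
    exact hptbd t ht s ⟨hs.1.le, hs.2⟩
  -- Cauchy–Schwarz type bound: ∫₀ᵗ ‖B‖ ≤ √T √IT
  have hCS : ∀ t ∈ Set.Icc (0:ℝ) T, (∫ s in (0:ℝ)..t, ‖B s‖) ≤ Real.sqrt T * Real.sqrt IT := by
    intro t ht
    set c : ℝ := Real.sqrt IT / Real.sqrt T with hc
    have hcpos : 0 < c := div_pos hsI hsT
    have hB2t : IntervalIntegrable (fun s => ‖B s‖ ^ 2) volume 0 t :=
      hB_L2.mono_set' (hsub t ht)
    calc (∫ s in (0:ℝ)..t, ‖B s‖) ≤ ∫ s in (0:ℝ)..t, (c / 2 + ‖B s‖ ^ 2 / (2 * c)) := by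
          apply intervalIntegral.integral_mono_on ht.1 (hBnorm_int.mono_set' (hsub t ht))
            (intervalIntegrable_const.add (hB2t.div_const _))
          intro s _
          rw [← sub_nonneg]
          have heq : c / 2 + ‖B s‖ ^ 2 / (2 * c) - ‖B s‖ = (‖B s‖ - c) ^ 2 / (2 * c) := by
            field_simp; ring
          rw [heq]
          positivity
      _ = c / 2 * t + (∫ s in (0:ℝ)..t, ‖B s‖ ^ 2) / (2 * c) := by
          rw [intervalIntegral.integral_add intervalIntegrable_const (hB2t.div_const _),
            intervalIntegral.integral_const, intervalIntegral.integral_div]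
          simp [smul_eq_mul]; ring
      _ ≤ c / 2 * T + IT / (2 * c) := by
          have h1 : (∫ s in (0:ℝ)..t, ‖B s‖ ^ 2) ≤ IT :=
            intervalIntegral.integral_mono_interval le_rfl ht.1 ht.2
              (Filter.Eventually.of_forall fun s => sq_nonneg _) hB_L2
          gcongr
          exact ht.2
      _ = Real.sqrt T * Real.sqrt IT := by
          rw [hc]
          field_simp
          nlinarith [hTT, hII]
  -- norm bound for Sens t
  have hSensnorm : ∀ t ∈ Set.Icc (0:ℝ) T, ‖Sens t‖ ≤ Real.sqrt T * Real.sqrt IT := by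
    intro t ht
    calc ‖Sens t‖ ≤ ∫ s in (0:ℝ)..t, ‖exp ((t - s) • A) ∘L B s‖ := by
          rw [hSens]
          exact intervalIntegral.norm_integral_le_integral_norm ht.1
      _ ≤ ∫ s in (0:ℝ)..t, ‖B s‖ := by
          apply intervalIntegral.integral_mono_on ht.1 (hSint t ht).norm
            (hBnorm_int.mono_set' (hsub t ht))
          exact hptbd t ht
      _ ≤ Real.sqrt T * Real.sqrt IT := hCS t ht
  -- splitting of the semigroup and continuity of t ↦ Sens t ξ on [0, T]
  have hh_meas : AEStronglyMeasurable (fun s => exp ((-s) • A) ∘L B s)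
      (volume.restrict (Set.uIoc (0:ℝ) T)) := by
    rw [Set.uIoc_of_le hT0]
    have hc : Continuous fun s : ℝ => exp ((-s) • A) :=
      exp_continuous.comp (continuous_id.neg.smul continuous_const)
    exact (ContinuousLinearMap.compL ℝ Θ X X).aestronglyMeasurable_comp₂
      hc.aestronglyMeasurable hB_meas
  have hcexp' : Continuous fun s : ℝ => exp ((-s) • A) :=
    exp_continuous.comp (continuous_id.neg.smul continuous_const)
  obtain ⟨M, hM⟩ : ∃ M : ℝ, ∀ s ∈ Set.Icc (0:ℝ) T, ‖exp ((-s) • A)‖ ≤ M := by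
    obtain ⟨M, hM⟩ := (isCompact_Icc (a := (0:ℝ)) (b := T)).exists_bound_of_continuousOn
      hcexp'.continuousOn
    exact ⟨M, hM⟩
  have hh_int : IntervalIntegrable (fun s => exp ((-s) • A) ∘L B s) volume 0 T := by
    apply IntervalIntegrable.mono_fun' (g := fun s => M * ‖B s‖) (hBnorm_int.const_mul M) hh_meas
    refine (MeasureTheory.ae_restrict_mem measurableSet_uIoc).mono fun s hs => ?_
    rw [Set.uIoc_of_le hT0] at hs
    calc ‖exp ((-s) • A) ∘L B s‖ ≤ ‖exp ((-s) • A)‖ * ‖B s‖ :=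
          ContinuousLinearMap.opNorm_comp_le _ _
      _ ≤ M * ‖B s‖ := by
          apply mul_le_mul_of_nonneg_right (hM s ⟨hs.1.le, hs.2⟩) (norm_nonneg _)
  have hH_cont : ContinuousOn (fun t => ∫ s in (0:ℝ)..t, exp ((-s) • A) ∘L B s)
      (Set.Icc (0:ℝ) T) := by
    have := intervalIntegral.continuousOn_primitive_interval (a := (0:ℝ)) (b := T)
      (f := fun s => exp ((-s) • A) ∘L B s) (μ := volume) ?_
    · rwa [Set.uIcc_of_le hT0] at this
    · rw [Set.uIcc_of_le hT0, integrableOn_Icc_iff_integrableOn_Ioc]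
      exact hh_int.1
  have hSens_eq : ∀ t ∈ Set.Icc (0:ℝ) T,
      Sens t = (exp (t • A)) ∘L (∫ s in (0:ℝ)..t, exp ((-s) • A) ∘L B s) := by
    intro t ht
    have hsplit : ∀ s : ℝ, exp ((t - s) • A) ∘L B s
        = (ContinuousLinearMap.compL ℝ Θ X X (exp (t • A))) (exp ((-s) • A) ∘L B s) := by
      intro s
      have h1 : (t - s) • A = t • A + (-s) • A := by
        rw [← add_smul]; ring_nf
      have h2 : exp ((t - s) • A) = exp (t • A) * exp ((-s) • A) := by
        rw [h1]
        exact exp_add_of_commute (((Commute.refl A).smul_right (-s)).smul_left t)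
      rw [ContinuousLinearMap.compL_apply, h2, ContinuousLinearMap.mul_def,
        ContinuousLinearMap.comp_assoc]
    rw [hSens]
    simp only
    rw [intervalIntegral.integral_congr (g :=
        fun s => (ContinuousLinearMap.compL ℝ Θ X X (exp (t • A))) (exp ((-s) • A) ∘L B s))
        (fun s _ => hsplit s)]
    rw [← ContinuousLinearMap.compL_apply]
    exact (ContinuousLinearMap.compL ℝ Θ X X (exp (t • A))).intervalIntegral_comp_comm
      (hh_int.mono_set' (hsub t ht))
  have hSens_cont : ContinuousOn (fun t => Sens t ξ) (Set.Icc (0:ℝ) T) := by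
    have hexp : Continuous fun t : ℝ => exp (t • A) :=
      exp_continuous.comp (continuous_id.smul continuous_const)
    have h1 : ContinuousOn (fun t => (exp (t • A)) ∘L
        (∫ s in (0:ℝ)..t, exp ((-s) • A) ∘L B s)) (Set.Icc (0:ℝ) T) :=
      hexp.continuousOn.clm_comp hH_cont
    have h2 : ContinuousOn (fun t => Sens t) (Set.Icc (0:ℝ) T) :=
      ContinuousOn.congr h1 hSens_eq
    exact ((ContinuousLinearMap.apply ℝ X ξ).continuous.comp_continuousOn h2)
  -- the two functions
  set a : ℝ → Y := fun t => C (exp (t • A) Δζ) with ha_def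
  set b : ℝ → Y := fun t => C (Sens t ξ) with hb_def
  have ha_cont : Continuous a := by
    apply C.continuous.comp
    exact (ContinuousLinearMap.apply ℝ X Δζ).continuous.comp
      (exp_continuous.comp (continuous_id.smul continuous_const))
  have hb_cont : ContinuousOn b (Set.Icc (0:ℝ) T) := C.continuous.comp_continuousOn hSens_cont
  -- integrability of the three squared norms
  have ha2_int : IntervalIntegrable (fun t => ‖a t‖ ^ 2) volume 0 T :=
    ((ha_cont.norm).pow 2).intervalIntegrable 0 T
  have hb2_int : IntervalIntegrable (fun t => ‖b t‖ ^ 2) volume 0 T := by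
    apply ContinuousOn.intervalIntegrable
    rw [Set.uIcc_of_le hT0]
    exact (hb_cont.norm).pow 2
  have hab2_int : IntervalIntegrable (fun t => ‖a t + b t‖ ^ 2) volume 0 T := by
    apply ContinuousOn.intervalIntegrable
    rw [Set.uIcc_of_le hT0]
    exact ((ha_cont.continuousOn.add hb_cont).norm).pow 2
  -- F5 : ∫‖a‖² ≤ 2∫‖a+b‖² + 2∫‖b‖²
  have h5 : (∫ t in (0:ℝ)..T, ‖a t‖ ^ 2)
      ≤ 2 * (∫ t in (0:ℝ)..T, ‖a t + b t‖ ^ 2) + 2 * ∫ t in (0:ℝ)..T, ‖b t‖ ^ 2 := by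
    have := intervalIntegral.integral_mono_on hT0 ha2_int
      ((hab2_int.const_mul 2).add (hb2_int.const_mul 2))
      (fun t _ => by
        have h1 : ‖a t‖ ≤ ‖a t + b t‖ + ‖b t‖ := by
          have := norm_sub_le (a t + b t) (b t)
          simpa using this
        nlinarith [norm_nonneg (a t + b t), norm_nonneg (b t), norm_nonneg (a t),
          sq_nonneg (‖a t + b t‖ - ‖b t‖)])
    rwa [intervalIntegral.integral_add (hab2_int.const_mul 2) (hb2_int.const_mul 2),
      intervalIntegral.integral_const_mul, intervalIntegral.integral_const_mul] at this
  -- F6 : ∫‖b‖² ≤ L² ‖ξ‖²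
  have h6 : (∫ t in (0:ℝ)..T, ‖b t‖ ^ 2) ≤ L ^ 2 * ‖ξ‖ ^ 2 := by
    have hbd : ∀ t ∈ Set.Icc (0:ℝ) T,
        ‖b t‖ ^ 2 ≤ (‖C‖ * (Real.sqrt T * Real.sqrt IT) * ‖ξ‖) ^ 2 := by
      intro t ht
      have h1 : ‖b t‖ ≤ ‖C‖ * (Real.sqrt T * Real.sqrt IT) * ‖ξ‖ := by
        calc ‖b t‖ ≤ ‖C‖ * ‖Sens t ξ‖ := C.le_opNorm _
          _ ≤ ‖C‖ * (‖Sens t‖ * ‖ξ‖) := by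
              apply mul_le_mul_of_nonneg_left ((Sens t).le_opNorm ξ) (norm_nonneg C)
          _ ≤ ‖C‖ * ((Real.sqrt T * Real.sqrt IT) * ‖ξ‖) := by
              apply mul_le_mul_of_nonneg_left _ (norm_nonneg C)
              exact mul_le_mul_of_nonneg_right (hSensnorm t ht) (norm_nonneg ξ)
          _ = ‖C‖ * (Real.sqrt T * Real.sqrt IT) * ‖ξ‖ := by ring
      have h0 : (0:ℝ) ≤ ‖b t‖ := norm_nonneg _
      nlinarith
    calc (∫ t in (0:ℝ)..T, ‖b t‖ ^ 2)
        ≤ ∫ _t in (0:ℝ)..T, (‖C‖ * (Real.sqrt T * Real.sqrt IT) * ‖ξ‖) ^ 2 :=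
          intervalIntegral.integral_mono_on hT0 hb2_int intervalIntegrable_const hbd
      _ = T * (‖C‖ * (Real.sqrt T * Real.sqrt IT) * ‖ξ‖) ^ 2 := by
          rw [intervalIntegral.integral_const]; simp [smul_eq_mul]
      _ = L ^ 2 * ‖ξ‖ ^ 2 := by
          rw [hL]
          linear_combination (T * ‖C‖ ^ 2 * ‖ξ‖ ^ 2 * Real.sqrt IT * Real.sqrt IT) * hTT
  -- F4
  have h4 : γ ^ 2 * ‖Δζ‖ ^ 2 ≤ ∫ t in (0:ℝ)..T, ‖a t‖ ^ 2 := hobs Δζ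
  -- F3
  have hJ0 : 0 ≤ ∫ t in (0:ℝ)..T, ‖a t + b t‖ ^ 2 :=
    intervalIntegral.integral_nonneg hT0 fun t _ => sq_nonneg _
  -- inner product bounds
  have hQ : δ * ‖ξ‖ ^ 2 ≤ ⟪ξ, U₀ ξ⟫ := hU₀ ξ
  -- final arithmetic
  set m : ℝ := min (δ / L ^ 2) 1 with hm_def
  have hm1 : m ≤ δ / L ^ 2 := min_le_left _ _
  have hm2 : m ≤ 1 := min_le_right _ _
  have hm0 : 0 ≤ m := le_min (by positivity) zero_le_one
  have hL2 : (0:ℝ) < L ^ 2 := by positivity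
  have hmL : m * L ^ 2 ≤ δ := by
    have := mul_le_mul_of_nonneg_right hm1 hL2.le
    rwa [div_mul_cancel₀ δ (ne_of_gt hL2)] at this
  have key : γ ^ 2 * ‖Δζ‖ ^ 2
      ≤ 2 * (∫ t in (0:ℝ)..T, ‖a t + b t‖ ^ 2) + 2 * (L ^ 2 * ‖ξ‖ ^ 2) := by linarith
  show m * γ ^ 2 * ‖Δζ‖ ^ 2 ≤ 2 * ⟪ξ, U₀ ξ⟫ + 2 * ∫ t in (0:ℝ)..T, ‖a t + b t‖ ^ 2
  nlinarith [mul_le_mul_of_nonneg_left key hm0, hJ0, hQ, hmL, sq_nonneg ‖ξ‖,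
    mul_nonneg hm0 hJ0, mul_le_mul_of_nonneg_right hmL (sq_nonneg ‖ξ‖)]
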